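/- Let f and g be nonzero polynomials in ℂ[x,y] and set h = Σ_{α=0}^{totalDegree f} (1/α!) • (∂_y^α f) · (∂_x^α g), computed in the commutative polynomial ring ℂ[x,y]. Then h ≠ 0 and the degree of h in the variable y equals the degree of f in y plus the degree of g in y, i.e., degreeOf y h = degreeOf y f + degreeOf y g. -/

import Mathlib

open MvPolynomial

/-- The leading coefficient in y of the normal-ordered product is the product of
the leading coefficients in y of the factors. -/
private lemma coeff_pderiv' (i : Fin 2) (f : MvPolynomial (Fin 2) ℂ) (d : Fin 2 →₀ ℕ) :
    coeff d (pderiv i f) = ((d i + 1 : ℕ) : ℂ) * coeff (d + Finsupp.single i 1) f := by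
  induction f using MvPolynomial.induction_on' with
  | add p q hp hq => simp [hp, hq, mul_add]
  | monomial s a =>
    rw [pderiv_monomial, coeff_monomial, coeff_monomial]
    split_ifs with h1 h2 h2
    · subst h2
      simp only [Finsupp.coe_add, Pi.add_apply, Finsupp.single_eq_same]
      push_cast; ring
    · have hsi : s i = 0 := by
        by_contra hsi
        apply h2
        ext j
        have hj := DFunLike.congr_fun h1 j
        rw [Finsupp.tsub_apply] at hj
        rw [Finsupp.add_apply]
        by_cases hji : j = i
        · subst hji
          rw [Finsupp.single_eq_same] at hj ⊢
          omega
        · rw [Finsupp.single_eq_of_ne' (Ne.symm hji)] at hj ⊢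
          omega
      simp [hsi]
    · exfalso; apply h1; subst h2; ext j
      rw [Finsupp.tsub_apply, Finsupp.add_apply]; omega
    · simp

private lemma deg_pderiv_ne {i j : Fin 2} (h : j ≠ i) (f : MvPolynomial (Fin 2) ℂ) :
    degreeOf i (pderiv j f) ≤ degreeOf i f := by
  rw [degreeOf_le_iff]
  intro m hm
  rw [mem_support_iff, coeff_pderiv'] at hm
  have h2 : coeff (m + Finsupp.single j 1) f ≠ 0 := fun h0 => hm (by rw [h0, mul_zero])
  have := monomial_le_degreeOf i (mem_support_iff.2 h2)
  simpa [Finsupp.add_apply, Finsupp.single_eq_of_ne' h] using this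

private lemma deg_pderiv_self_lt {i : Fin 2} {f : MvPolynomial (Fin 2) ℂ}
    (h : pderiv i f ≠ 0) : degreeOf i (pderiv i f) < degreeOf i f := by
  have key : ∀ m ∈ (pderiv i f).support, m i + 1 ≤ degreeOf i f := by
    intro m hm
    rw [mem_support_iff, coeff_pderiv'] at hm
    have h2 : coeff (m + Finsupp.single i 1) f ≠ 0 := fun h0 => hm (by rw [h0, mul_zero])
    have := monomial_le_degreeOf i (mem_support_iff.2 h2)
    simpa [Finsupp.add_apply, Finsupp.single_eq_same] using this
  obtain ⟨m, hm⟩ := MvPolynomial.support_nonempty.mpr h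
  have hpos : 0 < degreeOf i f := lt_of_lt_of_le (Nat.succ_pos _) (key m hm)
  rw [degreeOf_lt_iff hpos]
  intro m hm
  exact key m hm

private lemma iter_deg_ne {i j : Fin 2} (h : j ≠ i) (g : MvPolynomial (Fin 2) ℂ) (α : ℕ) :
    degreeOf i ((⇑(pderiv j))^[α] g) ≤ degreeOf i g := by
  induction α with
  | zero => simp
  | succ n ih =>
    rw [Function.iterate_succ_apply']
    exact le_trans (deg_pderiv_ne h _) ih

private lemma iter_deg_self {i : Fin 2} (f : MvPolynomial (Fin 2) ℂ) (α : ℕ)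
    (h : (⇑(pderiv i))^[α + 1] f ≠ 0) :
    degreeOf i ((⇑(pderiv i))^[α + 1] f) < degreeOf i f := by
  induction α with
  | zero => simpa using deg_pderiv_self_lt (by simpa using h)
  | succ n ih =>
    rw [Function.iterate_succ_apply'] at h ⊢
    have h1 : (⇑(pderiv i))^[n + 1] f ≠ 0 := fun h0 => h (by rw [h0, map_zero])
    exact lt_trans (deg_pderiv_self_lt h) (ih h1)

private lemma degOf0_mul (p q : MvPolynomial (Fin 2) ℂ) (hp : p ≠ 0) (hq : q ≠ 0) :
    degreeOf 0 (p * q) = degreeOf 0 p + degreeOf 0 q := by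
  rw [← natDegree_finSuccEquiv, ← natDegree_finSuccEquiv p, ← natDegree_finSuccEquiv q, map_mul,
    Polynomial.natDegree_mul (by simpa using hp) (by simpa using hq)]

private lemma degOf1_mul (p q : MvPolynomial (Fin 2) ℂ) (hp : p ≠ 0) (hq : q ≠ 0) :
    degreeOf 1 (p * q) = degreeOf 1 p + degreeOf 1 q := by
  have hswap : (Equiv.swap (0 : Fin 2) 1) 1 = 0 := Equiv.swap_apply_right 0 1
  have inj : Function.Injective (rename (Equiv.swap (0 : Fin 2) 1) :
      MvPolynomial (Fin 2) ℂ → MvPolynomial (Fin 2) ℂ) :=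
    rename_injective _ (Equiv.injective _)
  have key : ∀ r : MvPolynomial (Fin 2) ℂ,
      degreeOf 1 r = degreeOf 0 (rename (Equiv.swap (0 : Fin 2) 1) r) := by
    intro r
    have h2 := degreeOf_rename_of_injective
      (Equiv.injective (Equiv.swap (0 : Fin 2) 1)) (p := r) 1
    rw [hswap] at h2
    exact h2.symm
  have hp' : rename (Equiv.swap (0 : Fin 2) 1) p ≠ 0 :=
    fun h0 => hp (inj (h0.trans (map_zero _).symm))
  have hq' : rename (Equiv.swap (0 : Fin 2) 1) q ≠ 0 :=
    fun h0 => hq (inj (h0.trans (map_zero _).symm))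
  rw [key, key p, key q, map_mul, degOf0_mul _ _ hp' hq']

private lemma deg_smul_le (c : ℂ) (p : MvPolynomial (Fin 2) ℂ) (i : Fin 2) :
    degreeOf i (c • p) ≤ degreeOf i p := by
  rw [smul_eq_C_mul, mul_comm]
  exact degreeOf_mul_C_le p i c

theorem heisenberg_product_degreeOf
    (f g : MvPolynomial (Fin 2) ℂ) (hf : f ≠ 0) (hg : g ≠ 0) :
    (∑ α ∈ Finset.range (f.totalDegree + 1),
        ((α.factorial : ℂ)⁻¹) •
          ((⇑(pderiv (1 : Fin 2)))^[α] f * (⇑(pderiv (0 : Fin 2)))^[α] g)) ≠ 0 ∧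
    degreeOf (1 : Fin 2)
        (∑ α ∈ Finset.range (f.totalDegree + 1),
          ((α.factorial : ℂ)⁻¹) •
            ((⇑(pderiv (1 : Fin 2)))^[α] f * (⇑(pderiv (0 : Fin 2)))^[α] g)) =
      degreeOf (1 : Fin 2) f + degreeOf (1 : Fin 2) g := by
  set r : MvPolynomial (Fin 2) ℂ := ∑ α ∈ Finset.range f.totalDegree,
      (((α + 1).factorial : ℂ)⁻¹) •
        ((⇑(pderiv (1 : Fin 2)))^[α + 1] f * (⇑(pderiv (0 : Fin 2)))^[α + 1] g) with hr
  have hsplit : (∑ α ∈ Finset.range (f.totalDegree + 1),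
      ((α.factorial : ℂ)⁻¹) •
        ((⇑(pderiv (1 : Fin 2)))^[α] f * (⇑(pderiv (0 : Fin 2)))^[α] g)) = r + f * g := by
    rw [Finset.sum_range_succ']
    congr 1
    simp
  have hfg : degreeOf 1 (f * g) = degreeOf 1 f + degreeOf 1 g := degOf1_mul f g hf hg
  have hterm : ∀ α : ℕ,
      (((α + 1).factorial : ℂ)⁻¹) •
        ((⇑(pderiv (1 : Fin 2)))^[α + 1] f * (⇑(pderiv (0 : Fin 2)))^[α + 1] g) = 0 ∨
      degreeOf 1 ((((α + 1).factorial : ℂ)⁻¹) •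
        ((⇑(pderiv (1 : Fin 2)))^[α + 1] f * (⇑(pderiv (0 : Fin 2)))^[α + 1] g)) + 1 ≤
        degreeOf 1 f + degreeOf 1 g := by
    intro α
    by_cases hA : (⇑(pderiv (1 : Fin 2)))^[α + 1] f = 0
    · left; rw [hA, zero_mul, smul_zero]
    · right
      have h1 := iter_deg_self f α hA
      have h2 := iter_deg_ne (show (0 : Fin 2) ≠ 1 by decide) g (α + 1)
      have h3 := deg_smul_le (((α + 1).factorial : ℂ)⁻¹)
        ((⇑(pderiv (1 : Fin 2)))^[α + 1] f * (⇑(pderiv (0 : Fin 2)))^[α + 1] g) 1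
      have h4 := degreeOf_mul_le 1 ((⇑(pderiv (1 : Fin 2)))^[α + 1] f)
        ((⇑(pderiv (0 : Fin 2)))^[α + 1] g)
      omega
  rcases Nat.eq_zero_or_pos (degreeOf 1 f + degreeOf 1 g) with hD | hD
  · have hr0 : r = 0 := Finset.sum_eq_zero fun α _ => (hterm α).resolve_right (by omega)
    rw [hsplit, hr0, zero_add]
    exact ⟨mul_ne_zero hf hg, hfg⟩
  · have hrle : degreeOf 1 r < degreeOf 1 f + degreeOf 1 g := by
      apply lt_of_le_of_lt (degreeOf_sum_le _ _ _)
      rw [Finset.sup_lt_iff (by simpa using hD)]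
      intro b _
      rcases hterm b with h | h
      · rw [h, degreeOf_zero]; exact hD
      · omega
    rw [hsplit]
    constructor
    · intro h0
      have hne : f * g = -r := eq_neg_of_add_eq_zero_right h0
      rw [hne, degreeOf_neg] at hfg
      omega
    · apply le_antisymm
      · exact (degreeOf_add_le 1 r (f * g)).trans (max_le (le_of_lt hrle) (le_of_eq hfg))
      · have heq : f * g = (r + f * g) - r := by ring
        have h5 := degreeOf_sub_le 1 (r + f * g) r
        rw [← heq, hfg] at h5
        rcases le_max_iff.mp h5 with h | h
        · exact h
        · omega
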